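/- Value-difference bound via policy total variation: for any policies π₁ and π₂, (1−γ) |V(π₁) − V(π₂)| ≤ 2 (max_{a∈A, s∈S} |A^{π₂}(a,s)|) · Σ_{s∈S} d^{π₁,ν}(s) D_TV(π₁(·|s), π₂(·|s)). -/

import Mathlib

namespace VEPO

variable {S A : Type} [Fintype S] [Fintype A] [DecidableEq S] [DecidableEq A]

/-- A probability mass function on a finite type, represented as a real-valued function. -/
def IsPMF {X : Type} [Fintype X] (f : X → ℝ) : Prop :=
  (∀ x, 0 ≤ f x) ∧ ∑ x : X, f x = 1

/-- A transition kernel: for each action-state pair `(a, s)`, a pmf `p a s` on next states. -/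
def IsKernel (p : A → S → S → ℝ) : Prop := ∀ a s, IsPMF (p a s)

/-- A policy: for each state `s`, a pmf `π s` on actions. -/
def IsPolicy (π : S → A → ℝ) : Prop := ∀ s, IsPMF (π s)

/-- The `t`-step visitation probability `p_t^π(s' | a, s)`. -/
def visit (p : A → S → S → ℝ) (π : S → A → ℝ) : ℕ → A → S → S → ℝ
  | 0, _, s, s' => if s' = s then 1 else 0
  | 1, a, s, s' => p a s s'
  | (t + 2), a, s, s' =>
      ∑ s'' : S, visit p π (t + 1) a s s'' * ∑ a'' : A, π s'' a'' * p a'' s'' s'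

/-- The Q-function `Q^π(a, s)`. -/
noncomputable def Qfun (p : A → S → S → ℝ) (r : S → A → ℝ) (γ : ℝ)
    (π : S → A → ℝ) (a : A) (s : S) : ℝ :=
  r s a + ∑' t : ℕ, γ ^ (t + 1) *
    ∑ s' : S, visit p π (t + 1) a s s' * ∑ a' : A, π s' a' * r s' a'

/-- The value function `V^π(s)`. -/
noncomputable def Vfun (p : A → S → S → ℝ) (r : S → A → ℝ) (γ : ℝ)
    (π : S → A → ℝ) (s : S) : ℝ :=
  ∑ a : A, π s a * Qfun p r γ π a s

/-- The advantage function `A^π(a, s)`. -/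
noncomputable def Adv (p : A → S → S → ℝ) (r : S → A → ℝ) (γ : ℝ)
    (π : S → A → ℝ) (a : A) (s : S) : ℝ :=
  Qfun p r γ π a s - Vfun p r γ π s

/-- The conditional discounted visitation probability `d^π(s' | a, s)`. -/
noncomputable def dvisit (p : A → S → S → ℝ) (γ : ℝ) (π : S → A → ℝ)
    (s' : S) (a : A) (s : S) : ℝ :=
  (1 - γ) * ∑' t : ℕ, γ ^ t * visit p π t a s s'

/-- The integrated discounted visitation probability `d^{π,ν}(s')`. -/
noncomputable def dnu (p : A → S → S → ℝ) (γ : ℝ) (ν : S → ℝ)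
    (π : S → A → ℝ) (s' : S) : ℝ :=
  ∑ s : S, ∑ a : A, π s a * ν s * dvisit p γ π s' a s

/-- The integrated value `V(π) = Σ_s ν(s) V^π(s)`. -/
noncomputable def IntV (p : A → S → S → ℝ) (r : S → A → ℝ) (γ : ℝ) (ν : S → ℝ)
    (π : S → A → ℝ) : ℝ :=
  ∑ s : S, ν s * Vfun p r γ π s

/-- The first-order term `η₁(π₁, π₂)`. -/
noncomputable def eta1 (p : A → S → S → ℝ) (r : S → A → ℝ) (γ : ℝ) (ν : S → ℝ)
    (π₁ π₂ : S → A → ℝ) : ℝ :=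
  ∑ a : A, ∑ s : S, π₁ s a * Adv p r γ π₂ a s * dnu p γ ν π₂ s

/-- The higher-order remainder `η₂(π₁, π₂)`. -/
noncomputable def eta2 (p : A → S → S → ℝ) (r : S → A → ℝ) (γ : ℝ) (ν : S → ℝ)
    (π₁ π₂ : S → A → ℝ) : ℝ :=
  ∑ a : A, ∑ s : S, (π₁ s a - π₂ s a) * Adv p r γ π₂ a s *
    (dnu p γ ν π₁ s - dnu p γ ν π₂ s)

/-- Total variation distance between two pmfs on a finite type. -/
noncomputable def DTV {X : Type} [Fintype X] (μ₁ μ₂ : X → ℝ) : ℝ :=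
  (1 / 2) * ∑ x : X, |μ₁ x - μ₂ x|

/-- Kullback–Leibler divergence between two pmfs on a finite type, valued in `EReal`
(equal to `⊤` if `μ₁` is not absolutely continuous w.r.t. `μ₂`). -/
noncomputable def DKL {X : Type} [Fintype X] (μ₁ μ₂ : X → ℝ) : EReal :=
  ∑ x : X, (if μ₁ x = 0 then (0 : EReal)
    else if μ₂ x = 0 then (⊤ : EReal)
    else ((μ₁ x * Real.log (μ₁ x / μ₂ x) : ℝ) : EReal))

/-- Conditional discounted stationary probability ratio `ω^π(a', s'; a, s)`. -/
noncomputable def ratio (p : A → S → S → ℝ) (γ : ℝ) (pinf : A → S → ℝ)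
    (π : S → A → ℝ) (a' : A) (s' : S) (a : A) (s : S) : ℝ :=
  (1 - γ) * ((if a' = a ∧ s' = s then 1 else 0) +
    ∑' t : ℕ, γ ^ (t + 1) * (π s' a' * visit p π (t + 1) a s s')) / pinf a' s'

/-- Integrated discounted stationary probability ratio `ω^{π,ν}(a', s')`. -/
noncomputable def rationu (p : A → S → S → ℝ) (γ : ℝ) (pinf : A → S → ℝ) (ν : S → ℝ)
    (π : S → A → ℝ) (a' : A) (s' : S) : ℝ :=
  ∑ a : A, ∑ s : S, π s a * ν s * ratio p γ pinf π a' s' a s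

/-- Marginal state distribution `p̄_t^{π,ν}` at time `t` when `S₀ ~ ν` and actions follow `π`. -/
def marg (p : A → S → S → ℝ) (π : S → A → ℝ) (ν : S → ℝ) : ℕ → S → ℝ
  | 0, s' => ν s'
  | (t + 1), s' => ∑ s : S, marg p π ν t s * ∑ a : A, π s a * p a s s'

/-- Conditional discounted state–action visitation `q^π(a', s'; a, s)`. -/
noncomputable def qvisit (p : A → S → S → ℝ) (γ : ℝ) (π : S → A → ℝ)
    (a' : A) (s' : S) (a : A) (s : S) : ℝ :=
  (1 - γ) * ((if a' = a ∧ s' = s then 1 else 0) +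
    ∑' t : ℕ, γ ^ (t + 1) * (π s' a' * visit p π (t + 1) a s s'))

/-- The estimating function `ψ(o) = ψ₁ + ψ₂(o) + ψ₃(o)` evaluated at a data tuple
`o = (s, a, rr, s')`, for nuisance functions `Ṽ = Vt`, `Ã = At`, `ω̃ = ωt`
(with `ωt a' s' a s = ω̃(a',s'; a,s)`) and `d̃ = dt` (with `dt s* a s = d̃(s* | a, s)`). -/
noncomputable def psi (γ : ℝ) (ν : S → ℝ) (π πold : S → A → ℝ)
    (Vt : S → ℝ) (At : A → S → ℝ) (ωt : A → S → A → S → ℝ) (dt : S → A → S → ℝ)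
    (s : S) (a : A) (rr : ℝ) (s' : S) : ℝ :=
  let dtnu : S → ℝ := fun sstar => ∑ a0 : A, ∑ s0 : S, πold s0 a0 * ν s0 * dt sstar a0 s0
  let ωtnu : A → S → ℝ := fun a1 s1 => ∑ a0 : A, ∑ s0 : S, πold s0 a0 * ν s0 * ωt a1 s1 a0 s0
  (∑ sstar : S, dtnu sstar * ∑ astar : A, π sstar astar * At astar sstar)
  + (1 / (1 - γ)) * ∑ sstar : S, dtnu sstar * ∑ astar : A,
      (π sstar astar - πold sstar astar) * ωt a s astar sstar *
        (rr + γ * Vt s' - Vt s - At a s)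
  + (ωtnu a s / (1 - γ)) * ∑ astar : A,
      (γ * ∑ a' : A, πold s' a' * ∑ sstar : S, dt sstar a' s' * π sstar astar * At astar sstar
       - ∑ sstar : S, dt sstar a s * π sstar astar * At astar sstar
       + (1 - γ) * π s astar * At astar s)

/-- The expectation `E[ψ(O)]` of the estimating function, where `(A₀, S₀) ~ p_∞`,
`S₁ | (A₀, S₀) ~ p(· | A₀, S₀)` and `E[R₀ | A₀, S₀] = r(S₀, A₀)`;  since `ψ` is affine
in its reward argument with a coefficient not depending on `s'`, this finite sum is
exactly the expectation of `ψ(O)`. -/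
noncomputable def Epsi (p : A → S → S → ℝ) (r : S → A → ℝ) (γ : ℝ) (ν : S → ℝ)
    (pinf : A → S → ℝ) (π πold : S → A → ℝ)
    (Vt : S → ℝ) (At : A → S → ℝ) (ωt : A → S → A → S → ℝ) (dt : S → A → S → ℝ) : ℝ :=
  ∑ a : A, ∑ s : S, pinf a s * ∑ s' : S, p a s s' *
    psi γ ν π πold Vt At ωt dt s a (r s a) s'

section Aux

variable {S A : Type} [Fintype S] [Fintype A] [DecidableEq S] [DecidableEq A]

lemma pmf_mul_abs_le {X : Type} [Fintype X] {μ : X → ℝ} (h0 : ∀ x, 0 ≤ μ x)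
    (h1 : ∑ x : X, μ x = 1) {f : X → ℝ} {C : ℝ} (hf : ∀ x, |f x| ≤ C) :
    |∑ x : X, μ x * f x| ≤ C := by
  calc |∑ x : X, μ x * f x| ≤ ∑ x : X, |μ x * f x| := Finset.abs_sum_le_sum_abs _ _
    _ ≤ ∑ x : X, μ x * C := by
        refine Finset.sum_le_sum fun x _ => ?_
        rw [abs_mul, abs_of_nonneg (h0 x)]
        exact mul_le_mul_of_nonneg_left (hf x) (h0 x)
    _ = C := by rw [← Finset.sum_mul, h1, one_mul]

lemma summable_geom_bound {γ : ℝ} (hγ0 : 0 ≤ γ) (hγ1 : γ < 1) {x : ℕ → ℝ} {C : ℝ}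
    (hx : ∀ t, |x t| ≤ C) : Summable (fun t => γ ^ t * x t) := by
  refine Summable.of_norm_bounded
    ((summable_geometric_of_lt_one hγ0 hγ1).mul_right C) fun t => ?_
  rw [Real.norm_eq_abs, abs_mul, abs_pow, abs_of_nonneg hγ0]
  exact mul_le_mul_of_nonneg_left (hx t) (pow_nonneg hγ0 t)

/-- transition matrix of the Markov chain on states induced by policy `π`. -/
noncomputable def Kmat (p : A → S → S → ℝ) (π : S → A → ℝ) : Matrix S S ℝ :=
  Matrix.of fun s s' => ∑ a : A, π s a * p a s s'

variable {p : A → S → S → ℝ} {π : S → A → ℝ}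

lemma Kmat_nonneg (hp : IsKernel p) (hπ : IsPolicy π) (s s' : S) :
    0 ≤ Kmat p π s s' :=
  Finset.sum_nonneg fun a _ => mul_nonneg ((hπ s).1 a) ((hp a s).1 s')

lemma Kmat_rowsum (hp : IsKernel p) (hπ : IsPolicy π) (s : S) :
    ∑ s' : S, Kmat p π s s' = 1 := by
  simp only [Kmat, Matrix.of_apply]
  rw [Finset.sum_comm]
  calc ∑ a : A, ∑ s' : S, π s a * p a s s'
      = ∑ a : A, π s a := by
        refine Finset.sum_congr rfl fun a _ => ?_
        rw [← Finset.mul_sum, (hp a s).2, mul_one]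
    _ = 1 := (hπ s).2

lemma kpow_nonneg (hp : IsKernel p) (hπ : IsPolicy π) :
    ∀ t s s', 0 ≤ (Kmat p π ^ t) s s' := by
  intro t
  induction t with
  | zero => intro s s'; simp [Matrix.one_apply]; positivity
  | succ t ih =>
      intro s s'
      rw [pow_succ, Matrix.mul_apply]
      exact Finset.sum_nonneg fun k _ => mul_nonneg (ih s k) (Kmat_nonneg hp hπ k s')

lemma kpow_rowsum (hp : IsKernel p) (hπ : IsPolicy π) :
    ∀ t s, ∑ s' : S, (Kmat p π ^ t) s s' = 1 := by
  intro t
  induction t with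
  | zero => intro s; simp [Matrix.one_apply]
  | succ t ih =>
      intro s
      simp only [pow_succ', Matrix.mul_apply]
      rw [Finset.sum_comm]
      calc ∑ k : S, ∑ s' : S, Kmat p π s k * (Kmat p π ^ t) k s'
          = ∑ k : S, Kmat p π s k := by
            refine Finset.sum_congr rfl fun k _ => ?_
            rw [← Finset.mul_sum, ih k, mul_one]
        _ = 1 := Kmat_rowsum hp hπ s

lemma kpow_mul_abs_le (hp : IsKernel p) (hπ : IsPolicy π) {f : S → ℝ} {C : ℝ}
    (hf : ∀ s, |f s| ≤ C) (t : ℕ) (s : S) :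
    |∑ s' : S, (Kmat p π ^ t) s s' * f s'| ≤ C :=
  pmf_mul_abs_le (fun s' => kpow_nonneg hp hπ t s s') (kpow_rowsum hp hπ t s) hf

lemma visit_eq (t : ℕ) (a : A) (s s' : S) :
    visit p π (t + 1) a s s' = ∑ s₁ : S, p a s s₁ * (Kmat p π ^ t) s₁ s' := by
  induction t generalizing s' with
  | zero => simp [visit, Matrix.one_apply]
  | succ t ih =>
      show (∑ s'' : S, visit p π (t + 1) a s s'' * ∑ a'' : A, π s'' a'' * p a'' s'' s') = _
      calc ∑ s'' : S, visit p π (t + 1) a s s'' * ∑ a'' : A, π s'' a'' * p a'' s'' s'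
          = ∑ s'' : S, (∑ s₁ : S, p a s s₁ * (Kmat p π ^ t) s₁ s'') * Kmat p π s'' s' := by
            refine Finset.sum_congr rfl fun s'' _ => ?_; rw [ih]; rfl
        _ = ∑ s₁ : S, ∑ s'' : S, p a s s₁ * ((Kmat p π ^ t) s₁ s'' * Kmat p π s'' s') := by
            simp only [Finset.sum_mul, mul_assoc]
            exact Finset.sum_comm
        _ = ∑ s₁ : S, p a s s₁ * ∑ s'' : S, (Kmat p π ^ t) s₁ s'' * Kmat p π s'' s' := by
            simp only [Finset.mul_sum]
        _ = ∑ s₁ : S, p a s s₁ * (Kmat p π ^ (t + 1)) s₁ s' := by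
            refine Finset.sum_congr rfl fun s₁ _ => ?_
            rw [pow_succ, Matrix.mul_apply]

lemma pol_visit (hπ : IsPolicy π) (t : ℕ) (s s' : S) :
    ∑ a : A, π s a * visit p π t a s s' = (Kmat p π ^ t) s s' := by
  cases t with
  | zero =>
      simp only [visit, Matrix.one_apply, pow_zero]
      by_cases h : s' = s
      · subst h; simp [(hπ s').2]
      · simp [h, Ne.symm h]
  | succ t =>
      simp only [visit_eq]
      rw [pow_succ', Matrix.mul_apply]
      simp only [Finset.mul_sum]
      rw [Finset.sum_comm]
      refine Finset.sum_congr rfl fun s₁ _ => ?_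
      simp only [Kmat, Matrix.of_apply, Finset.sum_mul, mul_assoc]

lemma visit_nonneg (hp : IsKernel p) (hπ : IsPolicy π) (t : ℕ) (a : A) (s s' : S) :
    0 ≤ visit p π t a s s' := by
  cases t with
  | zero => simp only [visit]; positivity
  | succ t =>
      rw [visit_eq]
      exact Finset.sum_nonneg fun s₁ _ => mul_nonneg ((hp a s).1 s₁) (kpow_nonneg hp hπ t s₁ s')

lemma visit_rowsum (hp : IsKernel p) (hπ : IsPolicy π) (t : ℕ) (a : A) (s : S) :
    ∑ s' : S, visit p π t a s s' = 1 := by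
  cases t with
  | zero => simp [visit]
  | succ t =>
      simp only [visit_eq]
      rw [Finset.sum_comm]
      calc ∑ s₁ : S, ∑ s' : S, p a s s₁ * (Kmat p π ^ t) s₁ s'
          = ∑ s₁ : S, p a s s₁ := by
            refine Finset.sum_congr rfl fun s₁ _ => ?_
            rw [← Finset.mul_sum, kpow_rowsum hp hπ t s₁, mul_one]
        _ = 1 := (hp a s).2

lemma visit_le_one (hp : IsKernel p) (hπ : IsPolicy π) (t : ℕ) (a : A) (s s' : S) :
    visit p π t a s s' ≤ 1 := by
  rw [← visit_rowsum hp hπ t a s]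
  exact Finset.single_le_sum (fun x _ => visit_nonneg hp hπ t a s x) (Finset.mem_univ s')

end Aux
section Aux2

variable {S A : Type} [Fintype S] [Fintype A] [DecidableEq S] [DecidableEq A]
variable {p : A → S → S → ℝ} {π : S → A → ℝ}

lemma V_eq [Nonempty S] (r : S → A → ℝ) {γ : ℝ} (hp : IsKernel p) (hπ : IsPolicy π)
    (hγ0 : 0 ≤ γ) (hγ1 : γ < 1) (s : S) :
    Vfun p r γ π s = ∑' t : ℕ, γ ^ t *
      ∑ s' : S, (Kmat p π ^ t) s s' * (∑ a : A, π s' a * r s' a) := by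
  set g : S → ℝ := fun s' => ∑ a : A, π s' a * r s' a with hg
  set C : ℝ := Finset.univ.sup' Finset.univ_nonempty fun s' => |g s'| with hCdef
  have hC : ∀ s', |g s'| ≤ C := by
    intro s'; rw [hCdef]; exact Finset.le_sup' (fun s' => |g s'|) (Finset.mem_univ s')
  set X : ℕ → A → ℝ := fun t a => ∑ s' : S, visit p π (t + 1) a s s' * g s' with hX
  have hXb : ∀ t a, |X t a| ≤ C := fun t a =>
    pmf_mul_abs_le (fun s' => visit_nonneg hp hπ (t + 1) a s s')
      (visit_rowsum hp hπ (t + 1) a s) hC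
  have hsum : ∀ a, Summable (fun t => γ ^ (t + 1) * X t a) := by
    intro a
    have h : (fun t => γ ^ (t + 1) * X t a) = fun t => γ ^ t * (γ * X t a) := by
      funext t; ring
    rw [h]
    refine summable_geom_bound hγ0 hγ1 (C := γ * C) fun t => ?_
    rw [abs_mul, abs_of_nonneg hγ0]
    exact mul_le_mul_of_nonneg_left (hXb t a) hγ0
  have huK : ∀ t, ∑ a : A, π s a * X t a = ∑ s' : S, (Kmat p π ^ (t + 1)) s s' * g s' := by
    intro t
    simp only [hX, Finset.mul_sum]
    rw [Finset.sum_comm]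
    refine Finset.sum_congr rfl fun s' _ => ?_
    rw [← pol_visit hπ (t + 1) s s', Finset.sum_mul]
    exact Finset.sum_congr rfl fun a _ => by ring
  have huK0 : ∑ s' : S, (Kmat p π ^ 0) s s' * g s' = g s := by
    simp [Matrix.one_apply]
  have hsumall : Summable (fun t => γ ^ t * ∑ s' : S, (Kmat p π ^ t) s s' * g s') :=
    summable_geom_bound hγ0 hγ1 (fun t => kpow_mul_abs_le hp hπ hC t s)
  calc Vfun p r γ π s
      = ∑ a : A, (π s a * r s a + π s a * ∑' t : ℕ, γ ^ (t + 1) * X t a) := by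
        simp only [Vfun, Qfun, mul_add]; rfl
    _ = g s + ∑ a : A, ∑' t : ℕ, π s a * (γ ^ (t + 1) * X t a) := by
        rw [Finset.sum_add_distrib]
        exact congrArg _ (Finset.sum_congr rfl fun a _ => (tsum_mul_left).symm)
    _ = g s + ∑' t : ℕ, ∑ a : A, π s a * (γ ^ (t + 1) * X t a) := by
        rw [Summable.tsum_finsetSum (fun a _ => (hsum a).mul_left _)]
    _ = g s + ∑' t : ℕ, γ ^ (t + 1) * ∑ s' : S, (Kmat p π ^ (t + 1)) s s' * g s' := by
        refine congrArg _ (tsum_congr fun t => ?_)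
        rw [← huK t, Finset.mul_sum]
        exact Finset.sum_congr rfl fun a _ => by ring
    _ = ∑' t : ℕ, γ ^ t * ∑ s' : S, (Kmat p π ^ t) s s' * g s' := by
        rw [Summable.tsum_eq_zero_add hsumall, pow_zero, one_mul, huK0]

lemma Q_bellman [Nonempty S] (r : S → A → ℝ) {γ : ℝ} (hp : IsKernel p) (hπ : IsPolicy π)
    (hγ0 : 0 ≤ γ) (hγ1 : γ < 1) (a : A) (s : S) :
    Qfun p r γ π a s = r s a + γ * ∑ s₁ : S, p a s s₁ * Vfun p r γ π s₁ := by
  set g : S → ℝ := fun s' => ∑ a : A, π s' a * r s' a with hg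
  set C : ℝ := Finset.univ.sup' Finset.univ_nonempty fun s' => |g s'| with hCdef
  have hC : ∀ s', |g s'| ≤ C := by
    intro s'; rw [hCdef]; exact Finset.le_sup' (fun s' => |g s'|) (Finset.mem_univ s')
  set u : ℕ → S → ℝ := fun t s₁ => ∑ s' : S, (Kmat p π ^ t) s₁ s' * g s' with hu
  have hub : ∀ t s₁, |u t s₁| ≤ C := fun t s₁ => kpow_mul_abs_le hp hπ hC t s₁
  have hsum : ∀ s₁, Summable (fun t => γ ^ (t + 1) * u t s₁) := by
    intro s₁
    have h : (fun t => γ ^ (t + 1) * u t s₁) = fun t => γ ^ t * (γ * u t s₁) := by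
      funext t; ring
    rw [h]
    refine summable_geom_bound hγ0 hγ1 (C := γ * C) fun t => ?_
    rw [abs_mul, abs_of_nonneg hγ0]
    exact mul_le_mul_of_nonneg_left (hub t s₁) hγ0
  have key : ∀ t, ∑ s' : S, visit p π (t + 1) a s s' * g s' = ∑ s₁ : S, p a s s₁ * u t s₁ := by
    intro t
    simp only [visit_eq, Finset.sum_mul, hu, Finset.mul_sum, mul_assoc]
    exact Finset.sum_comm
  calc Qfun p r γ π a s
      = r s a + ∑' t : ℕ, γ ^ (t + 1) * ∑ s₁ : S, p a s s₁ * u t s₁ := by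
        simp only [Qfun]
        exact congrArg _ (tsum_congr fun t => by rw [key t])
    _ = r s a + ∑' t : ℕ, ∑ s₁ : S, p a s s₁ * (γ ^ (t + 1) * u t s₁) := by
        refine congrArg _ (tsum_congr fun t => ?_)
        rw [Finset.mul_sum]
        exact Finset.sum_congr rfl fun s₁ _ => by ring
    _ = r s a + ∑ s₁ : S, ∑' t : ℕ, p a s s₁ * (γ ^ (t + 1) * u t s₁) := by
        rw [Summable.tsum_finsetSum (fun s₁ _ => (hsum s₁).mul_left _)]
    _ = r s a + γ * ∑ s₁ : S, p a s s₁ * Vfun p r γ π s₁ := by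
        rw [Finset.mul_sum]
        refine congrArg _ (Finset.sum_congr rfl fun s₁ _ => ?_)
        rw [tsum_mul_left, V_eq r hp hπ hγ0 hγ1 s₁]
        have : ∑' t : ℕ, γ ^ (t + 1) * u t s₁ = γ * ∑' t : ℕ, γ ^ t * u t s₁ := by
          rw [← tsum_mul_left]
          exact tsum_congr fun t => by ring
        rw [this]; ring

end Aux2
section Aux3

variable {S A : Type} [Fintype S] [Fintype A] [DecidableEq S] [DecidableEq A]
variable {p : A → S → S → ℝ} {π : S → A → ℝ}

lemma kpow_le_one (hp : IsKernel p) (hπ : IsPolicy π) (t : ℕ) (s s' : S) :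
    (Kmat p π ^ t) s s' ≤ 1 := by
  rw [← kpow_rowsum hp hπ t s]
  exact Finset.single_le_sum (fun x _ => kpow_nonneg hp hπ t s x) (Finset.mem_univ s')

lemma fixed_zero [Nonempty S] {γ : ℝ} (hγ0 : 0 ≤ γ) (hγ1 : γ < 1)
    (hp : IsKernel p) (hπ : IsPolicy π) {D : S → ℝ}
    (hD : ∀ s, D s = γ * ∑ s₁ : S, Kmat p π s s₁ * D s₁) : ∀ s, D s = 0 := by
  set m := Finset.univ.sup' Finset.univ_nonempty fun s => |D s| with hm
  have hle : ∀ s, |D s| ≤ m := by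
    intro s; rw [hm]; exact Finset.le_sup' (fun s => |D s|) (Finset.mem_univ s)
  have hstep : ∀ s, |D s| ≤ γ * m := by
    intro s; rw [hD s, abs_mul, abs_of_nonneg hγ0]
    exact mul_le_mul_of_nonneg_left
      (pmf_mul_abs_le (Kmat_nonneg hp hπ s) (Kmat_rowsum hp hπ s) hle) hγ0
  obtain ⟨s₀, -, hs₀⟩ := Finset.exists_mem_eq_sup' (Finset.univ_nonempty (α := S))
    fun s => |D s|
  have hmm : m ≤ γ * m := by
    calc m = |D s₀| := hm.trans hs₀
      _ ≤ γ * m := hstep s₀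
  have hm0 : m ≤ 0 := by nlinarith
  intro s
  exact abs_eq_zero.mp (le_antisymm (le_trans (hle s) hm0) (abs_nonneg _))

lemma delta_bellman [Nonempty S] (r : S → A → ℝ) {γ : ℝ} (hp : IsKernel p)
    (hγ0 : 0 ≤ γ) (hγ1 : γ < 1) {π₁ π₂ : S → A → ℝ}
    (h1 : IsPolicy π₁) (h2 : IsPolicy π₂) (s : S) :
    Vfun p r γ π₁ s - Vfun p r γ π₂ s =
      (∑ a : A, π₁ s a * Adv p r γ π₂ a s) +
        γ * ∑ s₁ : S, Kmat p π₁ s s₁ * (Vfun p r γ π₁ s₁ - Vfun p r γ π₂ s₁) := by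
  have e3 : ∑ s₁ : S, Kmat p π₁ s s₁ * (Vfun p r γ π₁ s₁ - Vfun p r γ π₂ s₁) =
      ∑ a : A, π₁ s a * ∑ s₁ : S, p a s s₁ * (Vfun p r γ π₁ s₁ - Vfun p r γ π₂ s₁) := by
    simp only [Kmat, Matrix.of_apply, Finset.sum_mul, Finset.mul_sum, mul_assoc]
    exact Finset.sum_comm
  rw [e3]
  have hA : ∀ a, Adv p r γ π₂ a s =
      r s a + γ * ∑ s₁ : S, p a s s₁ * Vfun p r γ π₂ s₁ - Vfun p r γ π₂ s := by
    intro a; rw [Adv, Q_bellman r hp h2 hγ0 hγ1 a s]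
  have hV1 : Vfun p r γ π₁ s =
      ∑ a : A, π₁ s a * (r s a + γ * ∑ s₁ : S, p a s s₁ * Vfun p r γ π₁ s₁) := by
    exact Finset.sum_congr rfl fun a _ => by rw [Q_bellman r hp h1 hγ0 hγ1 a s]
  have hsplit : ∀ a : A, ∑ s₁ : S, p a s s₁ * (Vfun p r γ π₁ s₁ - Vfun p r γ π₂ s₁) =
      ∑ s₁ : S, p a s s₁ * Vfun p r γ π₁ s₁ - ∑ s₁ : S, p a s s₁ * Vfun p r γ π₂ s₁ := by
    intro a; simp [mul_sub, Finset.sum_sub_distrib]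
  have hV2s : Vfun p r γ π₂ s = ∑ a : A, π₁ s a * Vfun p r γ π₂ s := by
    rw [← Finset.sum_mul, (h1 s).2, one_mul]
  calc Vfun p r γ π₁ s - Vfun p r γ π₂ s
      = ∑ a : A, (π₁ s a * (r s a + γ * ∑ s₁ : S, p a s s₁ * Vfun p r γ π₁ s₁)
          - π₁ s a * Vfun p r γ π₂ s) := by
        rw [Finset.sum_sub_distrib, ← hV1, ← hV2s]
    _ = ∑ a : A, (π₁ s a * Adv p r γ π₂ a s
          + γ * (π₁ s a * ∑ s₁ : S, p a s s₁ * (Vfun p r γ π₁ s₁ - Vfun p r γ π₂ s₁))) := by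
        refine Finset.sum_congr rfl fun a _ => ?_
        rw [hA a, hsplit a]; ring
    _ = _ := by
        rw [Finset.sum_add_distrib, Finset.mul_sum]

lemma delta_eq_series [Nonempty S] (r : S → A → ℝ) {γ : ℝ} (hp : IsKernel p)
    (hγ0 : 0 ≤ γ) (hγ1 : γ < 1) {π₁ π₂ : S → A → ℝ}
    (h1 : IsPolicy π₁) (h2 : IsPolicy π₂) (s : S) :
    Vfun p r γ π₁ s - Vfun p r γ π₂ s =
      ∑' t : ℕ, γ ^ t * ∑ s' : S, (Kmat p π₁ ^ t) s s' *
        (∑ a : A, π₁ s' a * Adv p r γ π₂ a s') := by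
  set f : S → ℝ := fun s' => ∑ a : A, π₁ s' a * Adv p r γ π₂ a s' with hf
  set C : ℝ := Finset.univ.sup' Finset.univ_nonempty fun s' => |f s'| with hCdef
  have hC : ∀ s', |f s'| ≤ C := by
    intro s'; rw [hCdef]; exact Finset.le_sup' (fun s' => |f s'|) (Finset.mem_univ s')
  set w : S → ℝ := fun s => ∑' t : ℕ, γ ^ t * ∑ s' : S, (Kmat p π₁ ^ t) s s' * f s' with hw
  have hwsum : ∀ s, Summable (fun t => γ ^ t * ∑ s' : S, (Kmat p π₁ ^ t) s s' * f s') :=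
    fun s => summable_geom_bound hγ0 hγ1 (fun t => kpow_mul_abs_le hp h1 hC t s)
  have hub : ∀ t s₁, |∑ s' : S, (Kmat p π₁ ^ t) s₁ s' * f s'| ≤ C :=
    fun t s₁ => kpow_mul_abs_le hp h1 hC t s₁
  have hsum' : ∀ s₁, Summable (fun t => γ ^ (t + 1) * ∑ s' : S, (Kmat p π₁ ^ t) s₁ s' * f s') := by
    intro s₁
    have h : (fun t => γ ^ (t + 1) * ∑ s' : S, (Kmat p π₁ ^ t) s₁ s' * f s')
        = fun t => γ ^ t * (γ * ∑ s' : S, (Kmat p π₁ ^ t) s₁ s' * f s') := by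
      funext t; ring
    rw [h]
    refine summable_geom_bound hγ0 hγ1 (C := γ * C) fun t => ?_
    rw [abs_mul, abs_of_nonneg hγ0]
    exact mul_le_mul_of_nonneg_left (hub t s₁) hγ0
  have hw_bellman : ∀ s, w s = f s + γ * ∑ s₁ : S, Kmat p π₁ s s₁ * w s₁ := by
    intro s
    have hkey : ∀ t : ℕ, ∑ s' : S, (Kmat p π₁ ^ (t + 1)) s s' * f s' =
        ∑ s₁ : S, Kmat p π₁ s s₁ * ∑ s' : S, (Kmat p π₁ ^ t) s₁ s' * f s' := by
      intro t
      simp only [pow_succ', Matrix.mul_apply, Finset.sum_mul, Finset.mul_sum, mul_assoc]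
      exact Finset.sum_comm
    calc w s = γ ^ 0 * ∑ s' : S, (Kmat p π₁ ^ 0) s s' * f s' +
        ∑' t : ℕ, γ ^ (t + 1) * ∑ s' : S, (Kmat p π₁ ^ (t + 1)) s s' * f s' := by
          rw [hw]; exact Summable.tsum_eq_zero_add (hwsum s)
      _ = f s + ∑' t : ℕ, ∑ s₁ : S, Kmat p π₁ s s₁ *
            (γ ^ (t + 1) * ∑ s' : S, (Kmat p π₁ ^ t) s₁ s' * f s') := by
          congr 1
          · simp [Matrix.one_apply]
          · refine tsum_congr fun t => ?_
            rw [hkey t, Finset.mul_sum]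
            exact Finset.sum_congr rfl fun s₁ _ => by ring
      _ = f s + ∑ s₁ : S, ∑' t : ℕ, Kmat p π₁ s s₁ *
            (γ ^ (t + 1) * ∑ s' : S, (Kmat p π₁ ^ t) s₁ s' * f s') := by
          rw [Summable.tsum_finsetSum (fun s₁ _ => (hsum' s₁).mul_left _)]
      _ = f s + γ * ∑ s₁ : S, Kmat p π₁ s s₁ * w s₁ := by
          rw [Finset.mul_sum]
          refine congrArg _ (Finset.sum_congr rfl fun s₁ _ => ?_)
          rw [tsum_mul_left, hw]
          have h : ∑' t : ℕ, γ ^ (t + 1) * ∑ s' : S, (Kmat p π₁ ^ t) s₁ s' * f s'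
              = γ * ∑' t : ℕ, γ ^ t * ∑ s' : S, (Kmat p π₁ ^ t) s₁ s' * f s' := by
            rw [← tsum_mul_left]
            exact tsum_congr fun t => by ring
          rw [h]; ring
  have hDzero : ∀ s, (Vfun p r γ π₁ s - Vfun p r γ π₂ s) - w s = 0 := by
    refine fixed_zero hγ0 hγ1 hp h1 fun s => ?_
    have hsplit : ∑ s₁ : S, Kmat p π₁ s s₁ *
        ((Vfun p r γ π₁ s₁ - Vfun p r γ π₂ s₁) - w s₁) =
        ∑ s₁ : S, Kmat p π₁ s s₁ * (Vfun p r γ π₁ s₁ - Vfun p r γ π₂ s₁)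
          - ∑ s₁ : S, Kmat p π₁ s s₁ * w s₁ := by
      simp [mul_sub, Finset.sum_sub_distrib]
    rw [hsplit, delta_bellman r hp hγ0 hγ1 h1 h2 s, hw_bellman s]; ring
  have := hDzero s
  have h2' : Vfun p r γ π₁ s - Vfun p r γ π₂ s = w s := by linarith
  rw [h2', hw]

end Aux3
section Aux4

variable {S A : Type} [Fintype S] [Fintype A] [DecidableEq S] [DecidableEq A]
variable {p : A → S → S → ℝ} {π : S → A → ℝ}

lemma dnu_eq [Nonempty S] {γ : ℝ} (ν : S → ℝ) (hp : IsKernel p) (hπ : IsPolicy π)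
    (hγ0 : 0 ≤ γ) (hγ1 : γ < 1) (s' : S) :
    dnu p γ ν π s' = (1 - γ) * ∑ s : S, ν s * ∑' t : ℕ, γ ^ t * (Kmat p π ^ t) s s' := by
  simp only [dnu, dvisit]
  rw [Finset.mul_sum]
  refine Finset.sum_congr rfl fun s _ => ?_
  have hsummable : ∀ a : A, Summable (fun t => γ ^ t * visit p π t a s s') := by
    intro a
    refine summable_geom_bound hγ0 hγ1 (C := 1) fun t => ?_
    rw [abs_of_nonneg (visit_nonneg hp hπ t a s s')]
    exact visit_le_one hp hπ t a s s'
  calc ∑ a : A, π s a * ν s * ((1 - γ) * ∑' t : ℕ, γ ^ t * visit p π t a s s')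
      = ∑ a : A, ∑' t : ℕ, (π s a * ν s * (1 - γ)) * (γ ^ t * visit p π t a s s') := by
        refine Finset.sum_congr rfl fun a _ => ?_
        rw [tsum_mul_left]; ring
    _ = ∑' t : ℕ, ∑ a : A, (π s a * ν s * (1 - γ)) * (γ ^ t * visit p π t a s s') :=
        (Summable.tsum_finsetSum (fun a _ => (hsummable a).mul_left _)).symm
    _ = ∑' t : ℕ, (1 - γ) * (ν s * (γ ^ t * (Kmat p π ^ t) s s')) := by
        refine tsum_congr fun t => ?_
        have h : ∑ a : A, (π s a * ν s * (1 - γ)) * (γ ^ t * visit p π t a s s') =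
            (ν s * (1 - γ) * γ ^ t) * ∑ a : A, π s a * visit p π t a s s' := by
          rw [Finset.mul_sum]
          exact Finset.sum_congr rfl fun a _ => by ring
        rw [h, pol_visit hπ t s s']; ring
    _ = (1 - γ) * (ν s * ∑' t : ℕ, γ ^ t * (Kmat p π ^ t) s s') := by
        rw [tsum_mul_left, tsum_mul_left]

end Aux4
theorem value_difference_tv_bound {S A : Type} [Fintype S] [Fintype A] [DecidableEq S] [DecidableEq A]
    [Nonempty S] [Nonempty A]
    (p : A → S → S → ℝ) (r : S → A → ℝ) (γ : ℝ) (ν : S → ℝ) (Rmax : ℝ)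
    (hp : IsKernel p) (hr : ∀ s a, |r s a| ≤ Rmax)
    (hγ0 : 0 ≤ γ) (hγ1 : γ < 1) (hν : IsPMF ν)
    (π₁ π₂ : S → A → ℝ) (h1 : IsPolicy π₁) (h2 : IsPolicy π₂) :
    (1 - γ) * |IntV p r γ ν π₁ - IntV p r γ ν π₂| ≤
      2 * (Finset.univ.sup' Finset.univ_nonempty
            (fun as : A × S => |Adv p r γ π₂ as.1 as.2|)) *
        ∑ s : S, dnu p γ ν π₁ s * DTV (π₁ s) (π₂ s) := by
  set M : ℝ := Finset.univ.sup' Finset.univ_nonempty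
      (fun as : A × S => |Adv p r γ π₂ as.1 as.2|) with hMdef
  set f : S → ℝ := fun s' => ∑ a : A, π₁ s' a * Adv p r γ π₂ a s' with hf
  have hM : ∀ a s, |Adv p r γ π₂ a s| ≤ M := by
    intro a s; rw [hMdef]
    exact Finset.le_sup' (fun as : A × S => |Adv p r γ π₂ as.1 as.2|)
      (Finset.mem_univ (a, s))
  set Cf : ℝ := Finset.univ.sup' Finset.univ_nonempty fun s' => |f s'| with hCdef
  have hCf : ∀ s', |f s'| ≤ Cf := by
    intro s'; rw [hCdef]; exact Finset.le_sup' (fun s' => |f s'|) (Finset.mem_univ s')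
  -- the per-state summable series
  have hts : ∀ s s' : S, Summable (fun t : ℕ => (γ ^ t * (Kmat p π₁ ^ t) s s') * f s') := by
    intro s s'
    have hb : Summable (fun t : ℕ => γ ^ t * (Kmat p π₁ ^ t) s s') := by
      refine summable_geom_bound hγ0 hγ1 (C := 1) fun t => ?_
      rw [abs_of_nonneg (kpow_nonneg hp h1 t s s')]
      exact kpow_le_one hp h1 t s s'
    exact hb.mul_right (f s')
  -- performance-difference identity
  have hpdl : ∑ s' : S, dnu p γ ν π₁ s' * f s' =
      (1 - γ) * (IntV p r γ ν π₁ - IntV p r γ ν π₂) := by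
    calc ∑ s' : S, dnu p γ ν π₁ s' * f s'
        = ∑ s' : S, ((1 - γ) * ∑ s : S, ν s * ∑' t : ℕ, γ ^ t * (Kmat p π₁ ^ t) s s') * f s' := by
          exact Finset.sum_congr rfl fun s' _ => by rw [dnu_eq ν hp h1 hγ0 hγ1 s']
      _ = ∑ s : S, ∑ s' : S, (1 - γ) * (ν s * ((∑' t : ℕ, γ ^ t * (Kmat p π₁ ^ t) s s') * f s')) := by
          simp only [Finset.sum_mul, Finset.mul_sum, mul_assoc]
          exact Finset.sum_comm
      _ = (1 - γ) * ∑ s : S, ν s * (Vfun p r γ π₁ s - Vfun p r γ π₂ s) := by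
          rw [Finset.mul_sum]
          refine Finset.sum_congr rfl fun s _ => ?_
          rw [← Finset.mul_sum, ← Finset.mul_sum]
          congr 1; congr 1
          calc ∑ s' : S, (∑' t : ℕ, γ ^ t * (Kmat p π₁ ^ t) s s') * f s'
              = ∑ s' : S, ∑' t : ℕ, (γ ^ t * (Kmat p π₁ ^ t) s s') * f s' := by
                exact Finset.sum_congr rfl fun s' _ => (tsum_mul_right).symm
            _ = ∑' t : ℕ, ∑ s' : S, (γ ^ t * (Kmat p π₁ ^ t) s s') * f s' :=
                (Summable.tsum_finsetSum (fun s' _ => hts s s')).symm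
            _ = ∑' t : ℕ, γ ^ t * ∑ s' : S, (Kmat p π₁ ^ t) s s' * f s' := by
                refine tsum_congr fun t => ?_
                rw [Finset.mul_sum]
                exact Finset.sum_congr rfl fun s' _ => by ring
            _ = Vfun p r γ π₁ s - Vfun p r γ π₂ s :=
                (delta_eq_series r hp hγ0 hγ1 h1 h2 s).symm
      _ = (1 - γ) * (IntV p r γ ν π₁ - IntV p r γ ν π₂) := by
          congr 1
          simp [IntV, mul_sub, Finset.sum_sub_distrib]
  have hAz : ∀ s, ∑ a : A, π₂ s a * Adv p r γ π₂ a s = 0 := by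
    intro s
    simp only [Adv, mul_sub, Finset.sum_sub_distrib, ← Finset.sum_mul, (h2 s).2, one_mul]
    exact sub_eq_zero_of_eq rfl
  have hfb : ∀ s, |f s| ≤ M * (2 * DTV (π₁ s) (π₂ s)) := by
    intro s
    have hfs : f s = ∑ a : A, (π₁ s a - π₂ s a) * Adv p r γ π₂ a s := by
      rw [hf]
      simp only [sub_mul, Finset.sum_sub_distrib, hAz s, sub_zero]
    rw [hfs]
    calc |∑ a : A, (π₁ s a - π₂ s a) * Adv p r γ π₂ a s|
        ≤ ∑ a : A, |(π₁ s a - π₂ s a) * Adv p r γ π₂ a s| := Finset.abs_sum_le_sum_abs _ _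
      _ ≤ ∑ a : A, |π₁ s a - π₂ s a| * M := by
          refine Finset.sum_le_sum fun a _ => ?_
          rw [abs_mul]
          exact mul_le_mul_of_nonneg_left (hM a s) (abs_nonneg _)
      _ = M * (2 * DTV (π₁ s) (π₂ s)) := by
          rw [← Finset.sum_mul, DTV]; ring
  have hdnn : ∀ s', 0 ≤ dnu p γ ν π₁ s' := by
    intro s'
    refine Finset.sum_nonneg fun s _ => Finset.sum_nonneg fun a _ => ?_
    refine mul_nonneg (mul_nonneg ((h1 s).1 a) (hν.1 s)) ?_
    exact mul_nonneg (by linarith) (tsum_nonneg fun t =>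
      mul_nonneg (pow_nonneg hγ0 t) (visit_nonneg hp h1 t a s s'))
  have h1γ : (0 : ℝ) ≤ 1 - γ := by linarith
  calc (1 - γ) * |IntV p r γ ν π₁ - IntV p r γ ν π₂|
      = |(1 - γ) * (IntV p r γ ν π₁ - IntV p r γ ν π₂)| := by
        rw [abs_mul, abs_of_nonneg h1γ]
    _ = |∑ s' : S, dnu p γ ν π₁ s' * f s'| := by rw [hpdl]
    _ ≤ ∑ s' : S, |dnu p γ ν π₁ s' * f s'| := Finset.abs_sum_le_sum_abs _ _
    _ ≤ ∑ s' : S, dnu p γ ν π₁ s' * (M * (2 * DTV (π₁ s') (π₂ s'))) := by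
        refine Finset.sum_le_sum fun s' _ => ?_
        rw [abs_mul, abs_of_nonneg (hdnn s')]
        exact mul_le_mul_of_nonneg_left (hfb s') (hdnn s')
    _ = 2 * M * ∑ s : S, dnu p γ ν π₁ s * DTV (π₁ s) (π₂ s) := by
        rw [Finset.mul_sum]
        exact Finset.sum_congr rfl fun s' _ => by ring

end VEPO
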